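/- Two-sided bound on the contraction products: if positive numbers ρ_k satisfy ρ_0 = 1, ρ_{k+1} = (1−θ_k)ρ_k with τ β_k θ_k^γ = σ ρ_{k+1} and θ_k ∈ (0,1), and γ ≥ 1, then for all N ≥ 1, (1 + (σ/τ)^{1/γ} Σ_{k=0}^{N−1} β_k^{−1/γ})^{−γ} ≤ ρ_N ≤ (1 + γ^{−1}(σ/τ)^{1/γ} Σ_{k=0}^{N−1} β_k^{−1/γ})^{−γ}. -/
import Mathlib

theorem contraction_product_bounds (σ τ γ : ℝ)
    (hσ : 0 < σ) (hτ : 0 < τ) (hγ : 1 ≤ γ)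
    (β θ ρ : ℕ → ℝ) (hβ : ∀ k, 0 < β k) (hθ : ∀ k, θ k ∈ Set.Ioo (0 : ℝ) 1)
    (hρ0 : ρ 0 = 1) (hρ : ∀ k, ρ (k + 1) = (1 - θ k) * ρ k)
    (hcond : ∀ k, τ * β k * θ k ^ γ = σ * ρ (k + 1)) :
    ∀ N : ℕ, 1 ≤ N →
      (1 + (σ / τ) ^ (1 / γ) * ∑ k ∈ Finset.range N, β k ^ (-(1 / γ))) ^ (-γ) ≤ ρ N ∧
      ρ N ≤ (1 + γ⁻¹ * (σ / τ) ^ (1 / γ) * ∑ k ∈ Finset.range N, β k ^ (-(1 / γ))) ^ (-γ) := by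
  have hγ0 : (0:ℝ) < γ := lt_of_lt_of_le one_pos hγ
  have hγinv1 : 1 / γ ≤ 1 := by
    rw [div_le_one hγ0]; exact hγ
  have hγinv0 : 0 ≤ 1 / γ := by positivity
  have hρpos : ∀ k, 0 < ρ k := by
    intro k
    induction k with
    | zero => rw [hρ0]; exact one_pos
    | succ n ih =>
      rw [hρ n]
      exact mul_pos (by linarith [(hθ n).2]) ih
  set c : ℝ := (σ / τ) ^ (1 / γ) with hc
  have hcpos : 0 < c := Real.rpow_pos_of_pos (div_pos hσ hτ) _
  set b : ℕ → ℝ := fun k => β k ^ (-(1 / γ)) with hb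
  have hbpos : ∀ k, 0 < b k := fun k => Real.rpow_pos_of_pos (hβ k) _
  set x : ℕ → ℝ := fun k => (ρ k) ^ (-(1 / γ)) with hx
  have hxpos : ∀ k, 0 < x k := fun k => Real.rpow_pos_of_pos (hρpos k) _
  have hx0 : x 0 = 1 := by simp [hx, hρ0]
  -- θ k * x (k+1) = c * b k
  have key : ∀ k, θ k * x (k + 1) = c * b k := by
    intro k
    obtain ⟨hθp, hθ1⟩ := hθ k
    have hθγ : θ k ^ γ = σ / τ * ((β k)⁻¹ * ρ (k + 1)) := by
      have h1 : θ k ^ γ = σ * ρ (k + 1) / (τ * β k) := by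
        rw [eq_div_iff (mul_pos hτ (hβ k)).ne']
        linear_combination hcond k
      rw [h1]; ring
    have h2 : θ k = (σ / τ) ^ (1 / γ) * ((β k)⁻¹ ^ (1 / γ) * ρ (k + 1) ^ (1 / γ)) := by
      have e1 : (θ k ^ γ) ^ (1 / γ) = θ k := by
        rw [← Real.rpow_mul hθp.le, mul_one_div, div_self hγ0.ne', Real.rpow_one]
      rw [← e1, hθγ,
        Real.mul_rpow (div_pos hσ hτ).le
          (mul_nonneg (inv_nonneg.2 (hβ k).le) (hρpos (k + 1)).le),
        Real.mul_rpow (inv_nonneg.2 (hβ k).le) (hρpos (k + 1)).le]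
    have hβinv : (β k)⁻¹ ^ (1 / γ) = b k := by
      rw [hb, ← Real.rpow_neg_one, ← Real.rpow_mul (hβ k).le, neg_one_mul]
    have hρcan : ρ (k + 1) ^ (1 / γ) * x (k + 1) = 1 := by
      rw [hx, ← Real.rpow_add (hρpos (k + 1)), add_neg_cancel, Real.rpow_zero]
    calc θ k * x (k + 1)
        = c * b k * (ρ (k + 1) ^ (1 / γ) * x (k + 1)) := by
          rw [h2, hβinv, hc]; ring
      _ = c * b k := by rw [hρcan, mul_one]
  -- x recursion : x (k+1) * (1 - θ k)^(1/γ) = x k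
  have hxrec : ∀ k, x (k + 1) * (1 - θ k) ^ (1 / γ) = x k := by
    intro k
    obtain ⟨hθp, hθ1⟩ := hθ k
    have h1θ : (0:ℝ) < 1 - θ k := by linarith
    rw [hx]
    simp only [hρ k]
    rw [Real.mul_rpow h1θ.le (hρpos k).le, mul_comm ((1 - θ k) ^ (-(1/γ))) _,
      mul_assoc, ← Real.rpow_add h1θ, neg_add_cancel, Real.rpow_zero, mul_one]
  -- step bounds
  have hstep : ∀ k, c * b k / γ ≤ x (k + 1) - x k ∧ x (k + 1) - x k ≤ c * b k := by
    intro k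
    obtain ⟨hθp, hθ1⟩ := hθ k
    have h1θ : (0:ℝ) < 1 - θ k := by linarith
    have hs1 : 1 - θ k ≤ (1 - θ k) ^ (1 / γ) := by
      nth_rewrite 1 [← Real.rpow_one (1 - θ k)]
      exact Real.rpow_le_rpow_of_exponent_ge h1θ (by linarith) hγinv1
    have hs2 : (1 - θ k) ^ (1 / γ) ≤ 1 - θ k / γ := by
      have := rpow_one_add_le_one_add_mul_self (s := -(θ k)) (by linarith) hγinv0 hγinv1
      have e : (1:ℝ) - θ k = 1 + -(θ k) := by ring
      rw [e]
      exact le_of_le_of_eq this (by ring)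
    have hdiff : x (k + 1) - x k = x (k + 1) * (1 - (1 - θ k) ^ (1 / γ)) := by
      rw [mul_sub, mul_one, hxrec k]
    constructor
    · rw [hdiff, ← key k]
      have : θ k / γ * x (k + 1) ≤ x (k + 1) * (1 - (1 - θ k) ^ (1 / γ)) := by
        have := (hxpos (k + 1))
        nlinarith
      calc θ k * x (k + 1) / γ = θ k / γ * x (k + 1) := by ring
        _ ≤ _ := this
    · rw [hdiff, ← key k]
      have := hxpos (k + 1)
      nlinarith
  -- telescoping bounds on x
  have hxb : ∀ N : ℕ,
      1 + c / γ * ∑ k ∈ Finset.range N, b k ≤ x N ∧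
      x N ≤ 1 + c * ∑ k ∈ Finset.range N, b k := by
    intro N
    induction N with
    | zero => simp [hx0]
    | succ n ih =>
      obtain ⟨ih1, ih2⟩ := ih
      obtain ⟨hl, hr⟩ := hstep n
      rw [Finset.sum_range_succ]
      constructor
      · have : c * b n / γ = c / γ * b n := by ring
        rw [this] at hl
        linarith
      · linarith
  -- finish
  intro N hN
  obtain ⟨hl, hr⟩ := hxb N
  have hSpos : 0 ≤ ∑ k ∈ Finset.range N, b k :=
    Finset.sum_nonneg fun k _ => (hbpos k).le
  have hρeq : ρ N = (x N) ^ (-γ) := by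
    rw [hx, ← Real.rpow_mul (hρpos N).le]
    rw [show -(1 / γ) * -γ = γ / γ by ring, div_self hγ0.ne', Real.rpow_one]
  constructor
  · rw [hρeq]
    exact Real.rpow_le_rpow_of_nonpos (hxpos N) hr (by linarith)
  · rw [hρeq]
    have h1 : 0 < 1 + c / γ * ∑ k ∈ Finset.range N, b k := by positivity
    have := Real.rpow_le_rpow_of_nonpos h1 hl (show -γ ≤ 0 by linarith)
    calc (x N) ^ (-γ) ≤ (1 + c / γ * ∑ k ∈ Finset.range N, b k) ^ (-γ) := this
      _ = (1 + γ⁻¹ * c * ∑ k ∈ Finset.range N, b k) ^ (-γ) := by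
          rw [div_eq_inv_mul]
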